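/- The complete bipartite graph K_{3,3} is not Pfaffian. -/

import Mathlib

open scoped Classical

noncomputable instance {α : Type*} (G : SimpleGraph α) : DecidableRel G.Adj :=
  fun _ _ => Classical.propDecidable _

variable {V : Type*}

/-- `m` is a perfect matching of `G`: a fixed-point-free involution matching each
vertex to an adjacent vertex. -/
def IsPerfMatching (G : SimpleGraph V) (m : Equiv.Perm V) : Prop :=
  (∀ v, m v ≠ v) ∧ (∀ v, m (m v) = v) ∧ ∀ v, G.Adj v (m v)

/-- The sign of a list enumerating all elements of `V` exactly once, relative to the
enumeration sorted by the linear order `r` (junk value `1` for other lists). -/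
noncomputable def enumSign [Fintype V] (r : LinearOrder V) (l : List V) : ℤ :=
  letI := r
  if h : l.Nodup ∧ ∀ x, x ∈ l then
    let l₀ := (Finset.univ : Finset V).sort (· ≤ ·)
    let e₀ : Fin l₀.length ≃ V :=
      List.Nodup.getEquivOfForallMemList l₀ (Finset.sort_nodup _ _)
        (fun x => (Finset.mem_sort _).2 (Finset.mem_univ x))
    let e : Fin l.length ≃ V := List.Nodup.getEquivOfForallMemList l h.1 h.2
    have hlen : l₀.length = l.length := by
      simp only [l₀, Finset.length_sort]
      have h2 : l.toFinset = Finset.univ :=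
        Finset.eq_univ_iff_forall.2 fun x => List.mem_toFinset.2 (h.2 x)
      rw [← h2, List.toFinset_card_of_nodup h.1]
    Equiv.Perm.sign (e₀.symm.trans ((finCongr hlen).trans e))
  else 1

/-- The listing `u₁ w₁ u₂ w₂ …` of the edges of the perfect matching `m`, each edge
written according to the orientation `σ` (pairs ordered by their `r`-smaller vertex). -/
noncomputable def matchingList [Fintype V] (r : LinearOrder V) (σ : V → V → ℤ)
    (m : Equiv.Perm V) : List V :=
  letI := r
  ((Finset.univ.filter fun v : V => v < m v).sort (· ≤ ·)).flatMap fun v =>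
    if σ v (m v) = 1 then [v, m v] else [m v, v]

/-- The sign of a perfect matching under the orientation `σ`. -/
noncomputable def matchingSign [Fintype V] (r : LinearOrder V) (σ : V → V → ℤ)
    (m : Equiv.Perm V) : ℤ :=
  enumSign r (matchingList r σ m)

/-- `G` is Pfaffian: some orientation `σ` (a skew sign function, `±1` on edges) gives
all perfect matchings the same sign. -/
def IsPfaffian [Fintype V] (G : SimpleGraph V) : Prop :=
  ∃ σ : V → V → ℤ, (∀ u v, G.Adj u v → σ u v = 1 ∨ σ u v = -1) ∧
    (∀ u v, σ u v = -σ v u) ∧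
    ∀ (r : LinearOrder V) (m₁ m₂ : Equiv.Perm V),
      IsPerfMatching G m₁ → IsPerfMatching G m₂ →
        matchingSign r σ m₁ = matchingSign r σ m₂

/-- `G` is non-Pfaffian, but deleting any edge yields a Pfaffian graph. -/
def MinimalNonPfaffian [Fintype V] (G : SimpleGraph V) : Prop :=
  ¬ IsPfaffian G ∧ ∀ e ∈ G.edgeSet, IsPfaffian (G.deleteEdges {e})

/-- The graph obtained from `G` by contracting the vertex set `S` to a single vertex
(the `Sum.inr` vertex), deleting loops and parallel edges. -/
def contractSet (G : SimpleGraph V) (S : Set V) :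
    SimpleGraph ({x : V // x ∉ S} ⊕ Unit) where
  Adj a b :=
    match a, b with
    | Sum.inl a, Sum.inl b => G.Adj a.1 b.1
    | Sum.inl a, Sum.inr _ => ∃ s ∈ S, G.Adj a.1 s
    | Sum.inr _, Sum.inl b => ∃ s ∈ S, G.Adj s b.1
    | Sum.inr _, Sum.inr _ => False
  symm := by
    refine ⟨?_⟩
    rintro (a | a) (b | b) h
    · exact h.symm
    · obtain ⟨s, hs, ha⟩ := h; exact ⟨s, hs, ha.symm⟩
    · obtain ⟨s, hs, ha⟩ := h; exact ⟨s, hs, ha.symm⟩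
    · exact h.elim
  loopless := by
    refine ⟨?_⟩
    rintro (a | a) h
    · exact G.irrefl h
    · exact h

section Aux

open Sum Equiv

abbrev V6 := Fin 3 ⊕ Fin 3

def r6 : LinearOrder V6 := LinearOrder.lift' finSumFinEquiv finSumFinEquiv.injective

/-- sort of a finset equals a given sorted nodup list with the same elements -/
lemma sort_eq_of {α : Type*} [DecidableEq α] (r : LinearOrder α) (s : Finset α) (L : List α) :
    letI := r
    L.Nodup → L.Pairwise (· ≤ ·) → L.toFinset = s → s.sort (· ≤ ·) = L := by
  letI := r
  intro h1 h2 h3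
  rw [← h3]
  exact (List.toFinset_sort _ h1).2 h2

lemma enumSign_map_sort {V : Type*} [Fintype V] (r : LinearOrder V) (τ : Equiv.Perm V) :
    letI := r
    enumSign r (((Finset.univ : Finset V).sort (· ≤ ·)).map τ) = Equiv.Perm.sign τ := by
  letI := r
  have h1 : ((Finset.univ.sort (· ≤ ·) : List V).map τ).Nodup :=
    (Finset.sort_nodup _ _).map τ.injective
  have h2 : ∀ x, x ∈ (Finset.univ.sort (· ≤ ·) : List V).map τ := fun x =>
    List.mem_map.2 ⟨τ.symm x, (Finset.mem_sort _).2 (Finset.mem_univ _), τ.apply_symm_apply x⟩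
  rw [enumSign, dif_pos ⟨h1, h2⟩]
  dsimp only
  refine congrArg _ (congrArg _ (Equiv.ext fun v => ?_))
  simp only [Equiv.trans_apply, finCongr_apply, List.Nodup.getEquivOfForallMemList,
    Equiv.coe_fn_mk, Equiv.coe_fn_symm_mk]
  simp [List.get_eq_getElem]

lemma enumSign_map_sort' {V : Type*} [Fintype V] [DecidableEq V] (r : LinearOrder V)
    (τ : Equiv.Perm V) :
    letI := r
    enumSign r (((Finset.univ : Finset V).sort (· ≤ ·)).map τ) = Equiv.Perm.sign τ := by
  rw [enumSign_map_sort r τ]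
  congr!

lemma matchingList_eq {V : Type*} [Fintype V] [DecidableEq V] (r : LinearOrder V)
    (σ : V → V → ℤ) (m : Equiv.Perm V) (L : List V) :
    letI := r
    L.Nodup → L.Pairwise (· ≤ ·) → (∀ x, x ∈ L ↔ x < m x) →
      matchingList r σ m = L.flatMap fun v => if σ v (m v) = 1 then [v, m v] else [m v, v] := by
  letI := r
  intro h1 h2 h3
  rw [matchingList]
  congr 1
  refine sort_eq_of r _ L h1 h2 ?_
  ext x
  simp [h3]

lemma sort_univ_eq {V : Type*} [Fintype V] [DecidableEq V] (r : LinearOrder V) (L : List V) :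
    letI := r
    L.Nodup → L.Pairwise (· ≤ ·) → (∀ x, x ∈ L) →
      (Finset.univ : Finset V).sort (· ≤ ·) = L := by
  letI := r
  intro h1 h2 h3
  refine sort_eq_of r _ L h1 h2 ?_
  ext x
  simp [h3]

/-- the perfect matching of `K_{3,3}` given by a permutation -/
def mp (p : Equiv.Perm (Fin 3)) : Equiv.Perm V6 where
  toFun := Sum.elim (fun i => Sum.inr (p i)) (fun j => Sum.inl (p.symm j))
  invFun := Sum.elim (fun i => Sum.inr (p i)) (fun j => Sum.inl (p.symm j))
  left_inv := by rintro (i | j) <;> simp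
  right_inv := by rintro (i | j) <;> simp

def iota : Equiv.Perm V6 :=
  Equiv.swap (inl 1) (inr 0) * Equiv.swap (inr 0) (inr 1) * Equiv.swap (inr 1) (inl 2)

def tau (p : Equiv.Perm (Fin 3)) (b0 b1 b2 : Bool) : Equiv.Perm V6 :=
  Equiv.sumCongr 1 p * iota * (if b0 then 1 else Equiv.swap (inl 0) (inl 1)) *
    (if b1 then 1 else Equiv.swap (inl 2) (inr 0)) *
    (if b2 then 1 else Equiv.swap (inr 1) (inr 2))

def hsort6 := sort_univ_eq r6 [inl 0, inl 1, inl 2, inr 0, inr 1, inr 2]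
  (by decide) (by decide) (by rintro (x | x) <;> fin_cases x <;> simp)

lemma key6 (σ : V6 → V6 → ℤ) (p : Equiv.Perm (Fin 3)) (b0 b1 b2 : Bool)
    (h0 : σ (inl 0) (inr (p 0)) = if b0 then 1 else -1)
    (h1 : σ (inl 1) (inr (p 1)) = if b1 then 1 else -1)
    (h2 : σ (inl 2) (inr (p 2)) = if b2 then 1 else -1) :
    matchingSign r6 σ (mp p) = -(Equiv.Perm.sign p : ℤ) *
      ((if b0 then 1 else -1) * (if b1 then 1 else -1) * (if b2 then 1 else -1)) := by
  have hml := matchingList_eq r6 σ (mp p) [inl 0, inl 1, inl 2] (by decide) (by decide) (by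
    rintro (x | x)
    · simp only [mp, Equiv.coe_fn_mk, Sum.elim_inl]
      constructor
      · intro hx
        clear hx
        generalize p x = j
        revert x j
        decide
      · intro _
        fin_cases x <;> simp
    · simp only [mp, Equiv.coe_fn_mk, Sum.elim_inr]
      constructor
      · intro hx
        simp at hx
      · intro hx
        exfalso
        revert hx
        generalize p.symm x = j
        revert x j
        decide)
  have hflat : ([inl 0, inl 1, inl 2] : List V6).flatMap
        (fun v => if σ v (mp p v) = 1 then [v, mp p v] else [mp p v, v]) =
      [inl 0, inl 1, inl 2, inr 0, inr 1, inr 2].map (tau p b0 b1 b2) := by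
    cases b0 <;> cases b1 <;> cases b2 <;>
      simp_all [mp, tau, iota, Equiv.swap_apply_def, List.flatMap_cons]
  have h := enumSign_map_sort' r6 (tau p b0 b1 b2)
  rw [hsort6] at h
  show enumSign r6 (matchingList r6 σ (mp p)) = _
  rw [hml, hflat, h]
  have s1 : Equiv.Perm.sign (Equiv.swap (inl 0 : V6) (inl 1)) = -1 :=
    Equiv.Perm.sign_swap (by simp)
  have s2 : Equiv.Perm.sign (Equiv.swap (inl 2 : V6) (inr 0)) = -1 :=
    Equiv.Perm.sign_swap (by simp)
  have s3 : Equiv.Perm.sign (Equiv.swap (inr 1 : V6) (inr 2)) = -1 :=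
    Equiv.Perm.sign_swap (by simp)
  have s4 : Equiv.Perm.sign (Equiv.swap (inl 1 : V6) (inr 0)) = -1 :=
    Equiv.Perm.sign_swap (by simp)
  have s5 : Equiv.Perm.sign (Equiv.swap (inr 0 : V6) (inr 1)) = -1 :=
    Equiv.Perm.sign_swap (by simp)
  have s6 : Equiv.Perm.sign (Equiv.swap (inr 1 : V6) (inl 2)) = -1 :=
    Equiv.Perm.sign_swap (by simp)
  cases b0 <;> cases b1 <;> cases b2 <;>
    simp [tau, iota, map_mul, Equiv.Perm.sign_sumCongr, s1, s2, s3, s4, s5, s6,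
      Units.val_mul]

lemma hperf6 (p : Equiv.Perm (Fin 3)) :
    IsPerfMatching (completeBipartiteGraph (Fin 3) (Fin 3)) (mp p) := by
  refine ⟨?_, ?_, ?_⟩
  · rintro (v | v) <;> simp [mp]
  · rintro (v | v) <;> simp [mp]
  · rintro (v | v) <;> simp [mp]

end Aux

open Sum Equiv in
/-- The complete bipartite graph `K_{3,3}` is not Pfaffian. -/
theorem stmt12 : ¬ IsPfaffian (completeBipartiteGraph (Fin 3) (Fin 3)) := by
  rintro ⟨σ, hσ1, hσ2, hall⟩
  have hadj : ∀ i j : Fin 3, (completeBipartiteGraph (Fin 3) (Fin 3)).Adj (inl i) (inr j) := by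
    intro i j; simp
  have hx : ∀ i j : Fin 3, σ (inl i) (inr j) = 1 ∨ σ (inl i) (inr j) = -1 :=
    fun i j => hσ1 _ _ (hadj i j)
  have hval : ∀ i j : Fin 3, σ (inl i) (inr j) =
      if decide (σ (inl i) (inr j) = 1) then 1 else -1 := by
    intro i j; rcases hx i j with h | h <;> simp [h]
  have key' : ∀ p : Equiv.Perm (Fin 3),
      matchingSign r6 σ (mp p) = -(Equiv.Perm.sign p : ℤ) *
        (σ (inl 0) (inr (p 0)) * σ (inl 1) (inr (p 1)) * σ (inl 2) (inr (p 2))) := by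
    intro p
    rw [key6 σ p _ _ _ (hval 0 (p 0)) (hval 1 (p 1)) (hval 2 (p 2)),
      ← hval 0 (p 0), ← hval 1 (p 1), ← hval 2 (p 2)]
  set s := matchingSign r6 σ (mp 1) with hs
  have heq : ∀ p : Equiv.Perm (Fin 3), matchingSign r6 σ (mp p) = s :=
    fun p => hall r6 (mp p) (mp 1) (hperf6 p) (hperf6 1)
  have hne : ∀ i j : Fin 3, σ (inl i) (inr j) ≠ 0 := by
    intro i j; rcases hx i j with h | h <;> rw [h] <;> norm_num
  -- the six matchings
  have E1 := (key' 1).symm.trans (heq 1)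
  have EB := (key' (Equiv.swap 0 1 * Equiv.swap 1 2)).symm.trans
    (heq (Equiv.swap 0 1 * Equiv.swap 1 2))
  have EC := (key' (Equiv.swap 1 2 * Equiv.swap 0 1)).symm.trans
    (heq (Equiv.swap 1 2 * Equiv.swap 0 1))
  have ED := (key' (Equiv.swap 0 1)).symm.trans (heq (Equiv.swap 0 1))
  have EE := (key' (Equiv.swap 1 2)).symm.trans (heq (Equiv.swap 1 2))
  have EF := (key' (Equiv.swap 0 2)).symm.trans (heq (Equiv.swap 0 2))
  -- sign values
  have sg1 : ((Equiv.Perm.sign (1 : Equiv.Perm (Fin 3))) : ℤ) = 1 := by simp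
  have sgs : ∀ i j : Fin 3, i ≠ j →
      ((Equiv.Perm.sign (Equiv.swap i j)) : ℤ) = -1 := by
    intro i j h; rw [Equiv.Perm.sign_swap h]; rfl
  have sgB : ((Equiv.Perm.sign (Equiv.swap (0:Fin 3) 1 * Equiv.swap 1 2)) : ℤ) = 1 := by
    rw [map_mul]; push_cast [Equiv.Perm.sign_swap (show (0:Fin 3) ≠ 1 by decide),
      Equiv.Perm.sign_swap (show (1:Fin 3) ≠ 2 by decide)]
  have sgC : ((Equiv.Perm.sign (Equiv.swap (1:Fin 3) 2 * Equiv.swap 0 1)) : ℤ) = 1 := by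
    rw [map_mul]; push_cast [Equiv.Perm.sign_swap (show (1:Fin 3) ≠ 2 by decide),
      Equiv.Perm.sign_swap (show (0:Fin 3) ≠ 1 by decide)]
  simp only [sg1, show ((1 : Equiv.Perm (Fin 3)) 0) = 0 from rfl,
    show ((1 : Equiv.Perm (Fin 3)) 1) = 1 from rfl,
    show ((1 : Equiv.Perm (Fin 3)) 2) = 2 from rfl] at E1
  simp only [sgB, show ((Equiv.swap (0:Fin 3) 1 * Equiv.swap 1 2 : Equiv.Perm (Fin 3)) 0) = 1 from by decide,
    show ((Equiv.swap (0:Fin 3) 1 * Equiv.swap 1 2 : Equiv.Perm (Fin 3)) 1) = 2 from by decide,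
    show ((Equiv.swap (0:Fin 3) 1 * Equiv.swap 1 2 : Equiv.Perm (Fin 3)) 2) = 0 from by decide] at EB
  simp only [sgC, show ((Equiv.swap (1:Fin 3) 2 * Equiv.swap 0 1 : Equiv.Perm (Fin 3)) 0) = 2 from by decide,
    show ((Equiv.swap (1:Fin 3) 2 * Equiv.swap 0 1 : Equiv.Perm (Fin 3)) 1) = 0 from by decide,
    show ((Equiv.swap (1:Fin 3) 2 * Equiv.swap 0 1 : Equiv.Perm (Fin 3)) 2) = 1 from by decide] at EC
  simp only [sgs 0 1 (by decide), show ((Equiv.swap (0:Fin 3) 1) 0) = 1 from by decide,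
    show ((Equiv.swap (0:Fin 3) 1) 1) = 0 from by decide,
    show ((Equiv.swap (0:Fin 3) 1) 2) = 2 from by decide] at ED
  simp only [sgs 1 2 (by decide), show ((Equiv.swap (1:Fin 3) 2) 0) = 0 from by decide,
    show ((Equiv.swap (1:Fin 3) 2) 1) = 2 from by decide,
    show ((Equiv.swap (1:Fin 3) 2) 2) = 1 from by decide] at EE
  simp only [sgs 0 2 (by decide), show ((Equiv.swap (0:Fin 3) 2) 0) = 2 from by decide,
    show ((Equiv.swap (0:Fin 3) 2) 1) = 1 from by decide,
    show ((Equiv.swap (0:Fin 3) 2) 2) = 0 from by decide] at EF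
  -- now E1 : -1 * (x00*x11*x22) = s, etc.
  have m1 := congrArg₂ (· * · : ℤ → ℤ → ℤ) (congrArg₂ (· * · : ℤ → ℤ → ℤ) E1 EB) EC
  have m2 := congrArg₂ (· * · : ℤ → ℤ → ℤ) (congrArg₂ (· * · : ℤ → ℤ → ℤ) ED EE) EF
  have h2s : 2 * (s * s * s) = 0 := by linear_combination - m1 - m2
  have hsss : s * s * s = 0 := by linarith
  have hs3 : s ^ 3 = 0 := by linear_combination hsss
  have hs0 : s = 0 := by
    have := pow_eq_zero_iff (n := 3) (by norm_num) |>.mp hs3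
    exact this
  rw [hs0] at E1
  have : σ (inl 0) (inr 0) * σ (inl 1) (inr 1) * σ (inl 2) (inr 2) = 0 := by linarith
  exact (mul_ne_zero (mul_ne_zero (hne 0 0) (hne 1 1)) (hne 2 2)) this
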